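/- With notation as above, for any fixed k ≥ 3, the set {m_1(i) : i ∈ S_o} equals the set {m_k(i) : i ∈ S_e}, where m_1(i) = i - 1 and m_k(i) = i - 1 ± 2^(k-2) with sign + exactly when bit k-2 of i-1 is 0. -/

import Mathlib

/-- m_1(i) = i - 1. -/
def adinkraM1 (i : ℕ) : ℤ := (i : ℤ) - 1

/-- m_k(i) = i - 1 ± 2^(k-2), with sign + exactly when bit k-2 of i-1 is 0. -/
def adinkraMbit (k i : ℕ) : ℤ :=
  if Nat.testBit (i - 1) (k - 2) = false then (i : ℤ) - 1 + 2 ^ (k - 2)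
  else (i : ℤ) - 1 - 2 ^ (k - 2)

/-- S_o: odd i with an odd number of 1s in the binary expansion of i-1. -/
def adinkraSo (i : ℕ) : Prop := Odd i ∧ Odd (((i - 1).bits).count true)

/-- S_e: odd i with an even number of 1s in the binary expansion of i-1. -/
def adinkraSe (i : ℕ) : Prop := Odd i ∧ Even (((i - 1).bits).count true)


private lemma count_two_mul (n : ℕ) :
    ((2 * n).bits).count true = (n.bits).count true := by
  rcases eq_or_ne n 0 with rfl | h
  · simp
  · rw [Nat.bit0_bits n h]; simp

private lemma count_two_mul_add_one (n : ℕ) :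
    ((2 * n + 1).bits).count true = (n.bits).count true + 1 := by
  rw [Nat.bit1_bits n]; simp

private lemma xor_pow_eq_add : ∀ (b n : ℕ), n.testBit b = false →
    n ^^^ 2 ^ b = n + 2 ^ b := by
  intro b
  induction b with
  | zero =>
    intro n h
    have hm : n % 2 = 0 := by
      by_contra hc
      have : n % 2 = 1 := Nat.mod_two_ne_zero.mp hc
      simp [Nat.testBit_zero, this] at h
    have hbit : n = Nat.bit false (n / 2) := by
      rw [Nat.bit_val]; simp; omega
    have h2 : (1 : ℕ) = Nat.bit true 0 := by rw [Nat.bit_val]; simp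
    rw [pow_zero]
    conv_lhs => rw [hbit, h2]
    rw [Nat.xor_bit]
    simp [Nat.bit_val]
    omega
  | succ b ih =>
    intro n h
    have hn2 : 2 * n.div2 + (n.bodd).toNat = n := by
      have := Nat.bit_bodd_div2 n
      rw [Nat.bit_val] at this
      exact this
    have hb : (n.div2).testBit b = false := by
      rw [Nat.div2_val, ← Nat.testBit_succ]
      exact h
    have h2 : (2 : ℕ) ^ (b + 1) = Nat.bit false (2 ^ b) := by
      rw [Nat.bit_val]; simp [pow_succ]; ring
    conv_lhs => rw [← Nat.bit_bodd_div2 n, h2]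
    rw [Nat.xor_bit, ih _ hb]
    rw [Nat.bit_val]
    simp [pow_succ]
    omega

private lemma count_add_pow : ∀ (b n : ℕ), n.testBit b = false →
    ((n + 2 ^ b).bits).count true = (n.bits).count true + 1 := by
  intro b
  induction b with
  | zero =>
    intro n h
    have hm : n % 2 = 0 := by
      by_contra hc
      have : n % 2 = 1 := Nat.mod_two_ne_zero.mp hc
      simp [Nat.testBit_zero, this] at h
    obtain ⟨m, hm2⟩ : ∃ m, n = 2 * m := ⟨n / 2, by omega⟩
    subst hm2
    rw [pow_zero, count_two_mul_add_one, count_two_mul]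
  | succ b ih =>
    intro n h
    rcases Nat.even_or_odd n with he | ho
    · obtain ⟨m, hm⟩ := he
      have hm2 : n = 2 * m := by omega
      subst hm2
      have hb : m.testBit b = false := by
        have := h
        rw [Nat.testBit_succ] at this
        simpa using this
      have he2 : 2 * m + 2 ^ (b + 1) = 2 * (m + 2 ^ b) := by ring
      rw [he2, count_two_mul, count_two_mul, ih _ hb]
    · obtain ⟨m, hm⟩ := ho
      subst hm
      have hb : m.testBit b = false := by
        have := h
        rw [Nat.testBit_succ] at this
        rwa [show (2 * m + 1) / 2 = m from by omega] at this
      have he2 : 2 * m + 1 + 2 ^ (b + 1) = 2 * (m + 2 ^ b) + 1 := by ring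
      rw [he2, count_two_mul_add_one, count_two_mul_add_one, ih _ hb]

private lemma xor_parity (b t : ℕ) :
    (Odd ((t.bits).count true) ↔ Even (((t ^^^ 2 ^ b).bits).count true)) := by
  rcases Bool.eq_false_or_eq_true (t.testBit b) with htr | hf
  · -- bit set: s := t ^^^ 2^b has bit clear and s + 2^b = t
    set s := t ^^^ 2 ^ b with hs
    have hsb : s.testBit b = false := by
      simp [hs, Nat.testBit_xor, htr, Nat.testBit_two_pow_self]
    have hst : s + 2 ^ b = t := by
      rw [← xor_pow_eq_add b s hsb, hs, Nat.xor_assoc]; simp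
    have hc := count_add_pow b s hsb
    rw [hst] at hc
    rw [hc]
    constructor
    · intro hodd
      exact Nat.not_odd_iff_even.mp (fun ho => (Nat.odd_add_one.mp hodd) ho)
    · intro heven
      exact Nat.odd_add_one.mpr (Nat.not_odd_iff_even.mpr heven)
  · rw [xor_pow_eq_add b t hf, count_add_pow b t hf]
    constructor
    · exact Odd.add_one
    · intro heven
      exact Nat.not_even_iff_odd.mp (fun he =>
        (Nat.even_add_one.mp heven) he)

private lemma xor_even (b t : ℕ) (hb : 1 ≤ b) (ht : Even t) : Even (t ^^^ 2 ^ b) := by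
  rw [Nat.even_xor]
  exact ⟨fun _ => Nat.even_pow.mpr ⟨even_two, by omega⟩, fun _ => ht⟩

/-- For any fixed k ≥ 3, {m_1(i) : i ∈ S_o} = {m_k(i) : i ∈ S_e}. -/
theorem stmt5 (k : ℕ) (hk : 3 ≤ k) :
    {x : ℤ | ∃ i, adinkraSo i ∧ x = adinkraM1 i} =
      {x : ℤ | ∃ i, adinkraSe i ∧ x = adinkraMbit k i} := by
  set b := k - 2 with hbdef
  have hb1 : 1 ≤ b := by omega
  ext x
  simp only [Set.mem_setOf_eq]
  constructor
  · rintro ⟨i, ⟨hodd, hcnt⟩, rfl⟩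
    obtain ⟨m, hm⟩ := hodd
    have hi1 : i - 1 = 2 * m := by omega
    set t := i - 1 with ht
    have hti : (t : ℤ) = (i : ℤ) - 1 := by
      have h1 : 1 ≤ i := by omega
      push_cast [ht]; omega
    refine ⟨(t ^^^ 2 ^ b) + 1, ⟨?_, ?_⟩, ?_⟩
    · obtain ⟨c, hc⟩ := xor_even b t hb1 ⟨m, by omega⟩
      exact ⟨c, by omega⟩
    · simp only [Nat.add_sub_cancel]
      exact (xor_parity b t).mp hcnt
    · simp only [adinkraM1, adinkraMbit, Nat.add_sub_cancel]
      rcases Bool.eq_false_or_eq_true (t.testBit b) with htr | hf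
      · set s := t ^^^ 2 ^ b with hs
        have hsb : s.testBit b = false := by
          simp [hs, Nat.testBit_xor, htr, Nat.testBit_two_pow_self]
        have hst : s + 2 ^ b = t := by
          rw [← xor_pow_eq_add b s hsb, hs, Nat.xor_assoc]; simp
        rw [← hbdef, hsb]
        simp only [if_true]
        have hcast : (s : ℤ) + 2 ^ b = (t : ℤ) := by exact_mod_cast hst
        rw [hti] at hcast
        push_cast
        linarith [hcast]
      · have hadd := xor_pow_eq_add b t hf
        have hbit : (t ^^^ 2 ^ b).testBit b = true := by
          simp [Nat.testBit_xor, hf, Nat.testBit_two_pow_self]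
        rw [← hbdef, hbit]
        simp only [Bool.true_eq_false, if_false]
        have hcast : ((t ^^^ 2 ^ b : ℕ) : ℤ) = (t : ℤ) + 2 ^ b := by exact_mod_cast hadd
        rw [hti] at hcast
        push_cast
        linarith [hcast]
  · rintro ⟨i, ⟨hodd, hcnt⟩, rfl⟩
    obtain ⟨m, hm⟩ := hodd
    have hi1 : i - 1 = 2 * m := by omega
    set t := i - 1 with ht
    have hti : (t : ℤ) = (i : ℤ) - 1 := by
      have h1 : 1 ≤ i := by omega
      push_cast [ht]; omega
    refine ⟨(t ^^^ 2 ^ b) + 1, ⟨?_, ?_⟩, ?_⟩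
    · obtain ⟨c, hc⟩ := xor_even b t hb1 ⟨m, by omega⟩
      exact ⟨c, by omega⟩
    · simp only [Nat.add_sub_cancel]
      apply (xor_parity b (t ^^^ 2 ^ b)).mpr
      rw [Nat.xor_assoc]
      simpa using hcnt
    · simp only [adinkraM1, adinkraMbit, Nat.add_sub_cancel]
      rcases Bool.eq_false_or_eq_true (t.testBit b) with htr | hf
      · set s := t ^^^ 2 ^ b with hs
        have hsb : s.testBit b = false := by
          simp [hs, Nat.testBit_xor, htr, Nat.testBit_two_pow_self]
        have hst : s + 2 ^ b = t := by
          rw [← xor_pow_eq_add b s hsb, hs, Nat.xor_assoc]; simp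
        rw [← hbdef, htr]
        simp only [Bool.true_eq_false, if_false]
        have hcast : (s : ℤ) + 2 ^ b = (t : ℤ) := by exact_mod_cast hst
        rw [hti] at hcast
        push_cast
        linarith [hcast]
      · have hadd := xor_pow_eq_add b t hf
        rw [← hbdef, hf]
        simp only [if_true]
        have hcast : ((t ^^^ 2 ^ b : ℕ) : ℤ) = (t : ℤ) + 2 ^ b := by exact_mod_cast hadd
        rw [hti] at hcast
        push_cast
        linarith [hcast]
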